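/- The shuffle algebra (T(ℝ^d), ⧢) over the rationals (or reals) is a free commutative algebra: it is a polynomial algebra on the Lyndon words, so every word has a unique expression (up to ordering of factors) as a polynomial with rational coefficients in shuffle products of Lyndon words. -/

import Mathlib

set_option linter.unusedSectionVars false
set_option linter.unusedVariables false

/-- Multiset of all shuffles (interleavings) of two lists. -/
def shuffles {α : Type*} : List α → List α → Multiset (List α)
  | [], bs => {bs}
  | a :: as, [] => {a :: as}
  | a :: as, b :: bs =>
      (shuffles as (b :: bs)).map (a :: ·) + (shuffles (a :: as) bs).map (b :: ·)
termination_by as bs => as.length + bs.length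

/-- Sum of basis elements indexed by a multiset of words in
`T(ℝ^d) = List (Fin d) →₀ ℝ`. -/
noncomputable def mToF {I : Type*} (m : Multiset (List I)) : List I →₀ ℝ :=
  (m.map fun w => Finsupp.single w (1 : ℝ)).sum

/-- The shuffle product on the tensor algebra `T(ℝ^d)`, as the bilinear
extension of the shuffle of words. -/
noncomputable def shF {I : Type*} (x y : List I →₀ ℝ) : List I →₀ ℝ :=
  x.sum fun a ca => y.sum fun b cb => (ca * cb) • mToF (shuffles a b)

/-- Iterated shuffle product of a list of words (`1` for the empty list). -/
noncomputable def shListProd {I : Type*} (l : List (List I)) : List I →₀ ℝ :=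
  l.foldr (fun w acc => shF (Finsupp.single w (1 : ℝ)) acc) (Finsupp.single [] (1 : ℝ))

/-- A Lyndon word: a nonempty word that is lexicographically strictly smaller
than all of its proper right factors. -/
def IsLyndon {d : ℕ} (w : List (Fin d)) : Prop :=
  w ≠ [] ∧ ∀ u v : List (Fin d), w = u ++ v → u ≠ [] → v ≠ [] → List.Lex (· < ·) w v

/-- Lexicographic-or-equal order on words. -/
def WordLE {d : ℕ} (a b : List (Fin d)) : Prop := List.Lex (· < ·) a b ∨ a = b



open List

section LexTools
variable {A : Type*} [LinearOrder A]

theorem lex_lt_iff (a b : List A) : a < b ↔ List.Lex (· < ·) a b := Iff.rfl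
theorem lex_le_iff (a b : List A) : a ≤ b ↔ (a = b ∨ List.Lex (· < ·) a b) := Iff.rfl

theorem nil_lt {l : List A} (h : l ≠ []) : ([] : List A) < l := by
  cases l with
  | nil => exact absurd rfl h
  | cons a t => exact List.Lex.nil

theorem not_lt_nil (l : List A) : ¬ l < [] := List.not_lex_nil

theorem lt_cons_cancel {a : A} {u v : List A} : (a::u) < (a::v) ↔ u < v := List.lex_cons_iff

theorem lt_append_cancel (p : List A) {u v : List A} : (p++u) < (p++v) ↔ u < v := by
  induction p with
  | nil => rfl
  | cons a p ih => simpa [List.cons_append, lt_cons_cancel] using ih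

theorem le_append_cancel (p : List A) {u v : List A} : (p++u) ≤ (p++v) ↔ u ≤ v := by
  constructor
  · intro h
    rcases (lex_le_iff _ _).1 h with h | h
    · exact le_of_eq (List.append_cancel_left h)
    · exact le_of_lt ((lt_append_cancel p).1 h)
  · intro h
    rcases h.lt_or_eq with h | h
    · exact le_of_lt ((lt_append_cancel p).2 h)
    · exact le_of_eq (by rw [h])

theorem prefix_le {u v : List A} (h : u <+: v) : u ≤ v := by
  obtain ⟨t, rfl⟩ := h
  rcases eq_or_ne t [] with rfl | ht
  · simp
  · exact le_of_lt (by simpa using (lt_append_cancel u (u := [])).2 (nil_lt ht))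

/-- decomposition of a strict lex inequality -/
theorem lt_decomp {u v : List A} (h : u < v) :
    (u <+: v ∧ u ≠ v) ∨ ∃ p a b u' v', a < b ∧ u = p++a::u' ∧ v = p++b::v' := by
  induction h with
  | nil => exact Or.inl ⟨⟨_, rfl⟩, by simp⟩
  | @cons a l₁ l₂ h ih =>
      rcases ih with ⟨⟨t, rfl⟩, hne⟩ | ⟨p, x, y, u', v', hxy, rfl, rfl⟩
      · exact Or.inl ⟨⟨t, rfl⟩, by simpa using hne⟩
      · exact Or.inr ⟨a::p, x, y, u', v', hxy, rfl, rfl⟩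
  | @rel a₁ l₁ a₂ l₂ h => exact Or.inr ⟨[], a₁, a₂, l₁, l₂, h, rfl, rfl⟩

theorem lt_of_diff {a b : A} (p u' v' : List A) (h : a < b) :
    (p++a::u') < (p++b::v') := List.Lex.append_left _ (List.Lex.rel h) p

theorem lt_append_of_not_prefix {u v : List A} (h : u < v) (hp : ¬ u <+: v) (x y : List A) :
    (u++x) < (v++y) := by
  rcases lt_decomp h with ⟨h1, _⟩ | ⟨p, a, b, u', v', hab, rfl, rfl⟩
  · exact absurd h1 hp
  · have := lt_of_diff (a := a) (b := b) p (u'++x) (v'++y) hab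
    simpa [List.append_assoc] using this

theorem not_lt_of_prefix {u v : List A} (h : u <+: v) : ¬ v < u := not_lt_of_ge (prefix_le h)

theorem le_cons_cancel {a : A} {u v : List A} : (a::u) ≤ (a::v) ↔ u ≤ v :=
  le_append_cancel [a]

end LexTools

section Lyndon
variable {A : Type*} [LinearOrder A]

/-- general Lyndon predicate over a linear order -/
def Lyn (w : List A) : Prop :=
  w ≠ [] ∧ ∀ u v : List A, w = u ++ v → u ≠ [] → v ≠ [] → w < v

theorem Lyn.ne_nil {w : List A} (h : Lyn w) : w ≠ [] := h.1

theorem Lyn.suffix_lt {w u v : List A} (h : Lyn w) (e : w = u ++ v) (hu : u ≠ []) (hv : v ≠ []) :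
    w < v := h.2 u v e hu hv

theorem lyn_singleton (a : A) : Lyn [a] := by
  refine ⟨by simp, ?_⟩
  intro u v e hu hv
  exfalso
  have h1 : 0 < u.length := List.length_pos_iff.2 hu
  have h2 : 0 < v.length := List.length_pos_iff.2 hv
  have := congrArg List.length e
  simp at this
  omega

theorem lyn_append {u v : List A} (huv : u < v) (hu : Lyn u) (hv : Lyn v) : Lyn (u ++ v) := by
  have hune := hu.ne_nil
  have hvne := hv.ne_nil
  have key : u ++ v < v := by
    by_cases hp : u <+: v
    · obtain ⟨t, rfl⟩ := hp
      have htne : t ≠ [] := by rintro rfl; simp at huv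
      exact (lt_append_cancel u).2 (hv.suffix_lt rfl hune htne)
    · simpa using lt_append_of_not_prefix huv hp v []
  refine ⟨by simp [hune], ?_⟩
  intro x y e hx hy
  rcases List.append_eq_append_iff.1 e with ⟨w', hxw, hvw⟩ | ⟨w', huw, hyw⟩
  · -- x = u ++ w', v = w' ++ y
    rcases eq_or_ne w' [] with rfl | hw
    · simp only [List.nil_append] at hvw; subst hvw; exact key
    · exact lt_trans key (hv.suffix_lt hvw hw hy)
  · -- u = x ++ w', y = w' ++ v
    rcases eq_or_ne w' [] with rfl | hw
    · simp only [List.nil_append] at hyw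
      subst hyw
      simpa using key
    · subst hyw
      have hlt : u < w' := hu.suffix_lt huw hx hw
      have hnp : ¬ u <+: w' := by
        intro hp
        have h1 := hp.length_le
        have h2 := congrArg List.length huw
        simp at h2
        have : 0 < x.length := List.length_pos_iff.2 hx
        omega
      exact lt_append_of_not_prefix hlt hnp v v

end Lyndon

section CFLsec
variable {A : Type*} [LinearOrder A]

/-- merge step for the Chen-Fox-Lyndon factorization -/
def ins (c : List A) : List (List A) → List (List A)
  | [] => [c]
  | l :: L => if c < l then ins (c ++ l) L else c :: l :: L

/-- Chen-Fox-Lyndon factorization, computed letter by letter. -/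
def CFL : List A → List (List A)
  | [] => []
  | a :: w => ins [a] (CFL w)

/-- nonincreasing list of words -/
abbrev Decr (L : List (List A)) : Prop := List.Pairwise (fun a b : List A => b ≤ a) L

abbrev AllLyn (L : List (List A)) : Prop := ∀ x ∈ L, Lyn x

theorem decr_le_head {l : List A} {L : List (List A)} (h : Decr (l :: L)) :
    ∀ x ∈ L, x ≤ l := fun x hx => (List.pairwise_cons.1 h).1 x hx

theorem join_ins (c : List A) (L : List (List A)) : (ins c L).flatten = c ++ L.flatten := by
  induction L generalizing c with
  | nil => simp [ins]
  | cons l L ih =>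
      by_cases h : c < l
      · simp [ins, h, ih]
      · simp [ins, h]

theorem ins_ne_nil (c : List A) (L : List (List A)) : ins c L ≠ [] := by
  induction L generalizing c with
  | nil => simp [ins]
  | cons l L ih =>
      by_cases h : c < l
      · simpa [ins, h] using ih _
      · simp [ins, h]

theorem ins_good {c : List A} {L : List (List A)} (hc : Lyn c) (hd : Decr L) (ha : AllLyn L) :
    Decr (ins c L) ∧ AllLyn (ins c L) := by
  induction L generalizing c with
  | nil =>
      refine ⟨by simp [ins], ?_⟩
      intro x hx
      simp [ins] at hx
      subst hx; exact hc
  | cons l L ih =>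
      by_cases h : c < l
      · rw [ins, if_pos h]
        exact ih (lyn_append h hc (ha l (by simp))) hd.of_cons
          (fun x hx => ha x (List.mem_cons_of_mem _ hx))
      · rw [ins, if_neg h]
        have hlc : l ≤ c := le_of_not_gt h
        refine ⟨List.pairwise_cons.2 ⟨?_, hd⟩, ?_⟩
        · intro x hx
          rcases List.mem_cons.1 hx with rfl | hx
          · exact hlc
          · exact le_trans (decr_le_head hd x hx) hlc
        · intro x hx
          rcases List.mem_cons.1 hx with rfl | hx
          · exact hc
          · exact ha x hx

theorem join_CFL (w : List A) : (CFL w).flatten = w := by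
  induction w with
  | nil => simp [CFL]
  | cons a w ih => simp [CFL, join_ins, ih]

theorem CFL_good (w : List A) : Decr (CFL w) ∧ AllLyn (CFL w) := by
  induction w with
  | nil => exact ⟨by simp [CFL], by simp [CFL, AllLyn]⟩
  | cons a w ih => exact ins_good (lyn_singleton a) ih.1 ih.2

theorem CFL_decr (w : List A) : Decr (CFL w) := (CFL_good w).1
theorem CFL_lyn (w : List A) : AllLyn (CFL w) := (CFL_good w).2

theorem prefix_join_decomp :
    ∀ (Q : List (List A)) (r : List A), r <+: Q.flatten → r ≠ [] →
    ∃ Q₁ x Q₂ u, Q = Q₁ ++ x :: Q₂ ∧ r = Q₁.flatten ++ u ∧ u <+: x ∧ u ≠ [] := by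
  intro Q
  induction Q with
  | nil =>
      intro r h hr
      simp at h
      exact absurd h hr
  | cons x Q₂ ih =>
      intro r h hr
      by_cases hlen : r.length ≤ x.length
      · refine ⟨[], x, Q₂, r, by simp, by simp, ?_, hr⟩
        exact List.prefix_of_prefix_length_le (by simpa using h) (List.prefix_append _ _) hlen
      · push_neg at hlen
        have hxp : x <+: r :=
          List.prefix_of_prefix_length_le (List.prefix_append _ _) (by simpa using h)
            (le_of_lt hlen)
        obtain ⟨r', rfl⟩ := hxp
        have hr' : r' ≠ [] := by
          rintro rfl; simp at hlen
        have hpr : r' <+: Q₂.flatten := by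
          have h2 : x ++ r' <+: x ++ Q₂.flatten := by simpa using h
          obtain ⟨t, ht⟩ := h2
          exact ⟨t, by simpa using ht⟩
        obtain ⟨Q₁, y, Q₂', u, he, hru, hux, hune⟩ := ih r' hpr hr'
        exact ⟨x :: Q₁, y, Q₂', u, by simp [he], by simp [hru], hux, hune⟩

end CFLsec

section Uniq
variable {A : Type*} [LinearOrder A]

theorem flatten_ne_nil_of_head {p : List A} {P : List (List A)} (hp : p ≠ []) :
    (p :: P).flatten ≠ [] := by
  simp [hp]

theorem head_eq_of_le {p q : List A} {P Q : List (List A)}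
    (hPd : Decr (p::P)) (hPl : AllLyn (p::P)) (hQd : Decr (q::Q)) (hQl : AllLyn (q::Q))
    (hj : p ++ P.flatten = q ++ Q.flatten) (hlen : q.length ≤ p.length) : p = q := by
  have hq : q <+: p := by
    have h1 : q <+: p ++ P.flatten := by rw [hj]; exact List.prefix_append _ _
    exact List.prefix_of_prefix_length_le h1 (List.prefix_append _ _) hlen
  rcases eq_or_lt_of_le hlen with heq | hlt
  · exact (hq.eq_of_length heq).symm
  · exfalso
    obtain ⟨r, rfl⟩ := hq
    have hr : r ≠ [] := by rintro rfl; simp at hlt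
    have hrp : r <+: Q.flatten := by
      rw [List.append_assoc] at hj
      obtain ⟨t, ht⟩ := List.prefix_append q (r ++ P.flatten)
      have := List.append_cancel_left hj
      exact ⟨P.flatten, this⟩
    obtain ⟨Q₁, x, Q₂, u, hQe, hre, hux, hune⟩ := prefix_join_decomp Q r hrp hr
    have hqne : q ≠ [] := (hQl q (by simp)).ne_nil
    have hpq : q < q ++ r := by
      have : ([] : List A) < r := nil_lt hr
      simpa using (lt_append_cancel q (u := [])).2 this
    have hpu : q ++ r < u := by
      have : q ++ r = (q ++ Q₁.flatten) ++ u := by rw [hre]; simp [List.append_assoc]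
      exact (hPl _ (by simp)).suffix_lt this (by simp [hqne]) hune
    have hxmem : x ∈ Q := by rw [hQe]; simp
    have hux' : u ≤ x := prefix_le hux
    have hxq : x ≤ q := decr_le_head hQd x hxmem
    exact absurd (lt_trans (lt_of_lt_of_le hpu (le_trans hux' hxq)) hpq) (lt_irrefl _)

theorem cfl_unique : ∀ (P Q : List (List A)), Decr P → AllLyn P → Decr Q → AllLyn Q →
    P.flatten = Q.flatten → P = Q := by
  intro P
  induction P with
  | nil =>
      intro Q _ _ _ hQl hj
      cases Q with
      | nil => rfl
      | cons q Q => exact absurd hj.symm (flatten_ne_nil_of_head (hQl q (by simp)).ne_nil)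
  | cons p P ih =>
      intro Q hPd hPl hQd hQl hj
      cases Q with
      | nil => exact absurd hj (flatten_ne_nil_of_head (hPl p (by simp)).ne_nil)
      | cons q Q =>
          simp only [List.flatten_cons] at hj
          have hpq : p = q := by
            rcases le_total q.length p.length with h | h
            · exact head_eq_of_le hPd hPl hQd hQl hj h
            · exact (head_eq_of_le hQd hQl hPd hPl hj.symm h).symm
          subst hpq
          have := List.append_cancel_left hj
          rw [ih Q hPd.of_cons (fun x hx => hPl x (List.mem_cons_of_mem _ hx))
            hQd.of_cons (fun x hx => hQl x (List.mem_cons_of_mem _ hx)) this]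

theorem CFL_flatten_eq {L : List (List A)} (hd : Decr L) (hl : AllLyn L) :
    CFL L.flatten = L :=
  cfl_unique _ _ (CFL_decr _) (CFL_lyn _) hd hl (join_CFL _)

end Uniq

section Ksec
variable {A : Type*} [LinearOrder A]

/-- all CFL factors of `t` are `≤ b` -/
def FacLe (t b : List A) : Prop := ∀ f ∈ CFL t, f ≤ b

theorem CFL_ne_nil {t : List A} (ht : t ≠ []) : CFL t ≠ [] := by
  intro h
  apply ht
  rw [← join_CFL t, h]
  rfl

theorem CFL_cons_struct {t : List A} (ht : t ≠ []) :
    ∃ f G, CFL t = f :: G ∧ Lyn f ∧ t = f ++ G.flatten ∧ CFL G.flatten = G ∧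
      (∀ x ∈ G, x ≤ f) ∧ f ≠ [] := by
  obtain ⟨f, G, hfg⟩ := List.exists_cons_of_ne_nil (CFL_ne_nil ht)
  have hd := CFL_decr t
  have hl := CFL_lyn t
  rw [hfg] at hd hl
  have hG : CFL G.flatten = G :=
    CFL_flatten_eq hd.of_cons (fun x hx => hl x (List.mem_cons_of_mem _ hx))
  have hj : t = f ++ G.flatten := by
    conv_lhs => rw [← join_CFL t]
    rw [hfg]; rfl
  exact ⟨f, G, hfg, hl f (by simp), hj, hG, decr_le_head hd, (hl f (by simp)).ne_nil⟩

theorem suffix_lt_self {g s : List A} (hg : Lyn g) (hs : s <:+ g) (hne : s ≠ []) (hsg : s ≠ g) :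
    g < s := by
  obtain ⟨pre, rfl⟩ := hs
  have hpre : pre ≠ [] := by rintro rfl; simp at hsg
  exact hg.suffix_lt rfl hpre hne

theorem Kpp : ∀ (n : ℕ) (x b g s y : List A), x.length ≤ n → FacLe x b → b < g → Lyn g →
    s ≠ [] → s <:+ g → x < s ++ y := by
  intro n
  induction n with
  | zero =>
      intro x b g s y hn _ _ _ hs _
      have : x = [] := List.eq_nil_of_length_eq_zero (Nat.le_zero.1 hn)
      subst this
      exact nil_lt (by simp [hs])
  | succ n ih =>
      intro x b g s y hn hfac hbg hg hs hsg
      rcases eq_or_ne x [] with rfl | hx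
      · exact nil_lt (by simp [hs])
      obtain ⟨f, G, hcfl, hf, hxe, hGf, hle, hfne⟩ := CFL_cons_struct hx
      have hfb : f ≤ b := hfac f (by rw [hcfl]; simp)
      have hgs : g ≤ s := by
        rcases eq_or_ne s g with rfl | hne
        · exact le_refl _
        · exact le_of_lt (suffix_lt_self hg hsg hs hne)
      have hfs : f < s := lt_of_lt_of_le (lt_of_le_of_lt hfb hbg) hgs
      by_cases hp : f <+: s
      · obtain ⟨s₂, rfl⟩ := hp
        have hs₂ : s₂ ≠ [] := by rintro rfl; simp at hfs
        rw [hxe, List.append_assoc]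
        rw [lt_append_cancel f]
        refine ih G.flatten f g s₂ y ?_ ?_ (lt_of_le_of_lt hfb hbg) hg hs₂ ?_
        · have : x.length = f.length + G.flatten.length := by rw [hxe]; simp
          have : 0 < f.length := List.length_pos_iff.2 hfne
          omega
        · intro z hz
          rw [hGf] at hz
          exact hle z hz
        · exact List.IsSuffix.trans ⟨f, rfl⟩ hsg
      · rw [hxe]
        exact lt_append_of_not_prefix hfs hp _ _

theorem factors_of_suffix_gt :
    ∀ (n : ℕ) (m pre s : List A), s.length ≤ n → Lyn m → m = pre ++ s → pre ≠ [] →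
    ∀ f ∈ CFL s, m < f := by
  intro n
  induction n with
  | zero =>
      intro m pre s hn _ _ _ f hf
      have : s = [] := List.eq_nil_of_length_eq_zero (Nat.le_zero.1 hn)
      subst this
      simp [CFL] at hf
  | succ n ih =>
      intro m pre s hn hm hme hpre f hf
      rcases eq_or_ne s [] with rfl | hs
      · simp [CFL] at hf
      obtain ⟨f₁, G, hcfl, hf₁, hse, hGf, hle, hf₁ne⟩ := CFL_cons_struct hs
      have hms : m < s := hm.suffix_lt hme hpre hs
      have hhead : m < f₁ := by
        by_contra hcon
        push_neg at hcon
        by_cases hp : f₁ <+: m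
        · obtain ⟨m₂, rfl⟩ := hp
          have hflen : f₁.length ≤ s.length := by rw [hse]; simp
          have hslen : s.length < (f₁ ++ m₂).length := by
            have := congrArg List.length hme
            have : 0 < pre.length := List.length_pos_iff.2 hpre
            simp_all
          have hm₂ : m₂ ≠ [] := by rintro rfl; simp at hslen; omega
          have hx₂m₂ : m₂ < G.flatten := by
            rw [hse] at hms
            exact (lt_append_cancel f₁).1 hms
          have hf₁m : f₁ < f₁ ++ m₂ := by
            have : ([] : List A) < m₂ := nil_lt hm₂
            simpa using (lt_append_cancel f₁ (u := [])).2 this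
          have : G.flatten < m₂ ++ [] := by
            refine Kpp G.flatten.length G.flatten f₁ (f₁ ++ m₂) m₂ [] (le_refl _) ?_ hf₁m hm ?_ ⟨f₁, rfl⟩
            · intro z hz; rw [hGf] at hz; exact hle z hz
            · exact hm₂
          simp at this
          exact absurd (lt_trans hx₂m₂ this) (lt_irrefl _)
        · have hlt : f₁ < m := lt_of_le_of_ne hcon (fun h => hp (h ▸ List.prefix_refl _))
          have : s < m ++ [] := by
            rw [hse]
            exact lt_append_of_not_prefix hlt hp _ _
          simp at this
          exact absurd (lt_trans hms this) (lt_irrefl _)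
      rw [hcfl] at hf
      rcases List.mem_cons.1 hf with rfl | hf
      · exact hhead
      · refine ih m (pre ++ f₁) G.flatten ?_ hm ?_ (by simp [hpre]) f (by rw [hGf]; exact hf)
        · have h1 : s.length = f₁.length + G.flatten.length := by rw [hse]; simp
          have h2 : 0 < f₁.length := List.length_pos_iff.2 hf₁ne
          omega
        · rw [hme, hse, List.append_assoc]

end Ksec

section SortSec
variable {A : Type*} [LinearOrder A]

/-- sort a multiset of words in (weakly) decreasing order -/
def sortD (S : Multiset (List A)) : List (List A) := (S.sort (· ≤ ·)).reverse

/-- the concatenation of the decreasing sorting -/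
def Wm (S : Multiset (List A)) : List A := (sortD S).flatten

theorem sortD_coe (S : Multiset (List A)) : (↑(sortD S) : Multiset (List A)) = S := by
  rw [sortD, Multiset.coe_reverse, Multiset.sort_eq]

theorem sortD_decr (S : Multiset (List A)) : Decr (sortD S) := by
  rw [sortD, Decr, List.pairwise_reverse]
  exact Multiset.pairwise_sort _ _

instance : IsAntisymm (List A) (fun a b : List A => b ≤ a) := ⟨fun a b h1 h2 => le_antisymm h2 h1⟩

theorem sortD_eq {S : Multiset (List A)} {L : List (List A)} (hL : Decr L)
    (hc : (↑L : Multiset (List A)) = S) : sortD S = L :=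
  List.Perm.eq_of_pairwise (fun a b _ _ h1 h2 => le_antisymm h2 h1) (sortD_decr S) hL (Multiset.coe_eq_coe.1 (by rw [sortD_coe, hc]))

theorem sortD_zero : sortD (0 : Multiset (List A)) = [] := sortD_eq (by simp) rfl

theorem Wm_zero : Wm (0 : Multiset (List A)) = [] := by simp [Wm, sortD_zero]

theorem sortD_pop {S : Multiset (List A)} (hS : S ≠ 0) :
    ∃ h, h ∈ S ∧ (∀ x ∈ S, x ≤ h) ∧ sortD S = h :: sortD (S.erase h) ∧
      Wm S = h ++ Wm (S.erase h) := by
  have hne : sortD S ≠ [] := by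
    intro h
    apply hS
    rw [← sortD_coe S, h]; rfl
  obtain ⟨h, T, hT⟩ := List.exists_cons_of_ne_nil hne
  have hcoe := sortD_coe S
  rw [hT] at hcoe
  have hmem : h ∈ S := by rw [← hcoe]; simp
  have hd := sortD_decr S
  rw [hT] at hd
  have hTc : (↑T : Multiset (List A)) = S.erase h := by
    rw [← hcoe]
    simp [Multiset.cons_coe]
  have hTs : sortD (S.erase h) = T := sortD_eq hd.of_cons hTc
  refine ⟨h, hmem, ?_, by rw [hT, hTs], by rw [Wm, hT, List.flatten_cons, Wm, hTs]⟩
  intro x hx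
  rw [← hcoe, Multiset.coe_eq_coe.2 (List.Perm.refl _)] at hx
  have hx' : x ∈ h :: T := by exact_mod_cast hx
  rcases List.mem_cons.1 hx' with rfl | hx''
  · exact le_refl _
  · exact decr_le_head hd x hx''

end SortSec

section A7sec
variable {A : Type*} [LinearOrder A]

theorem A7 : ∀ (n : ℕ) (t : List A) (Q : Multiset (List A)) (g s' y : List A),
    t.length + Multiset.card Q ≤ n →
    Lyn g → s' ≠ [] → s' <:+ g → s' ≠ g →
    (∀ q ∈ Q, Lyn q ∧ q ≤ g) →
    (t = [] ∨ FacLe t g ∨ t < s') →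
    Wm ((CFL t : Multiset (List A)) + Q) < s' ++ y := by
  intro n
  induction n with
  | zero =>
      intro t Q g s' y hn hg hs' hsg hne hQ hinv
      have ht : t = [] := by
        have := List.eq_nil_of_length_eq_zero (by omega : t.length = 0)
        exact this
      have hQ0 : Q = 0 := Multiset.card_eq_zero.1 (by omega)
      subst ht; subst hQ0
      have hz : ((CFL ([] : List A) : Multiset (List A)) + 0) = 0 := by simp [CFL]
      rw [hz, Wm_zero]
      exact nil_lt (show s' ++ y ≠ [] by simp [hs'])
  | succ n ih =>
      intro t Q g s' y hn hg hs' hsg hne hQ hinv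
      by_cases hM : ((CFL t : Multiset (List A)) + Q) = 0
      · rw [hM, Wm_zero]
        exact nil_lt (show s' ++ y ≠ [] by simp [hs'])
      obtain ⟨h, hmem, hmax, _, hWm⟩ := sortD_pop hM
      rw [hWm]
      have hgs : g < s' := suffix_lt_self hg hsg hs' hne
      by_cases hhg : h ≤ g
      · -- small head
        have hhs : h < s' := lt_of_le_of_lt hhg hgs
        by_cases hp : h <+: s'
        · obtain ⟨s₂, rfl⟩ := hp
          have hs₂ : s₂ ≠ [] := by rintro rfl; simp at hhs
          rw [List.append_assoc, lt_append_cancel h]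
          have hsfx : s₂ <:+ g := List.IsSuffix.trans ⟨h, rfl⟩ hsg
          have hs₂g : s₂ ≠ g := by
            intro hcon
            have h1 := List.IsSuffix.length_le hsg
            have h2 := congrArg List.length hcon
            have h3 : 0 < h.length := by
              rcases Multiset.mem_add.1 hmem with hmem' | hmem'
              · have := (CFL_lyn t) h (by exact_mod_cast hmem')
                exact List.length_pos_iff.2 this.ne_nil
              · exact List.length_pos_iff.2 (hQ h hmem').1.ne_nil
            simp at h1 h2 ⊢
            omega
          rcases Multiset.mem_add.1 hmem with hmem' | hmem'
          · -- h is the head factor of t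
            have ht : t ≠ [] := by
              rintro rfl
              simp [CFL] at hmem'
            obtain ⟨f₁, G, hcfl, hf₁, hte, hGf, hle, hf₁ne⟩ := CFL_cons_struct ht
            have hhf : h = f₁ := by
              have h1 : h ≤ f₁ := by
                have hmemL : h ∈ f₁ :: G := by
                  rw [hcfl] at hmem'
                  exact_mod_cast hmem'
                rcases List.mem_cons.1 hmemL with rfl | hh
                · exact le_refl _
                · exact hle h hh
              have h2 : f₁ ≤ h := hmax f₁ (Multiset.mem_add.2 (Or.inl (by rw [hcfl]; exact_mod_cast List.mem_cons_self)))
              exact le_antisymm h1 h2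
            subst hhf
            have herase : ((CFL t : Multiset (List A)) + Q).erase h = ((G : Multiset (List A)) + Q) := by
              rw [Multiset.erase_add_left_pos _ hmem', hcfl]
              congr 1
              have hcc : ((h :: G : List (List A)) : Multiset (List A)) = h ::ₘ ↑G := by
                exact_mod_cast rfl
              rw [hcc, Multiset.erase_cons_head]
            rw [herase, ← hGf]
            refine ih G.flatten Q g s₂ y ?_ hg hs₂ hsfx hs₂g hQ ?_
            · have h1 : t.length = h.length + G.flatten.length := by rw [hte]; simp
              have h2 : 0 < h.length := List.length_pos_iff.2 hf₁ne
              omega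
            · right; left
              intro z hz
              rw [hGf] at hz
              exact le_trans (hle z hz) hhg
          · -- h ∈ Q
            have herase : ((CFL t : Multiset (List A)) + Q).erase h = ((CFL t : Multiset (List A)) + Q.erase h) :=
              Multiset.erase_add_right_pos _ hmem'
            rw [herase]
            refine ih t (Q.erase h) g s₂ y ?_ hg hs₂ hsfx hs₂g
              (fun q hq => hQ q (Multiset.mem_of_mem_erase hq)) ?_
            · have h1 := Multiset.card_erase_of_mem hmem'
              rw [Nat.pred_eq_sub_one] at h1
              have h2 : 0 < Multiset.card Q := Multiset.card_pos_iff_exists_mem.2 ⟨h, hmem'⟩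
              rw [h1]
              omega
            · rcases eq_or_ne t [] with rfl | ht
              · exact Or.inl rfl
              · right; left
                obtain ⟨f₁, G, hcfl, hf₁, hte, hGf, hle, hf₁ne⟩ := CFL_cons_struct ht
                have hf₁h : f₁ ≤ h := hmax f₁ (Multiset.mem_add.2 (Or.inl (by rw [hcfl]; exact_mod_cast List.mem_cons_self)))
                intro z hz
                rw [hcfl] at hz
                rcases List.mem_cons.1 hz with rfl | hz
                · exact le_trans hf₁h hhg
                · exact le_trans (le_trans (hle z hz) hf₁h) hhg
        · exact lt_append_of_not_prefix hhs hp _ _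
      · -- big head: h > g, so h is the head factor of t and t < s'
        push_neg at hhg
        have hmem' : h ∈ (CFL t : Multiset (List A)) := by
          rcases Multiset.mem_add.1 hmem with hmem' | hmem'
          · exact hmem'
          · exact absurd (hQ h hmem').2 (not_le_of_gt hhg)
        have ht : t ≠ [] := by rintro rfl; simp [CFL] at hmem'
        obtain ⟨f₁, G, hcfl, hf₁, hte, hGf, hle, hf₁ne⟩ := CFL_cons_struct ht
        have hhf : h = f₁ := by
          have h1 : h ≤ f₁ := by
            have hmemL : h ∈ f₁ :: G := by
              rw [hcfl] at hmem'
              exact_mod_cast hmem'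
            rcases List.mem_cons.1 hmemL with rfl | hh
            · exact le_refl _
            · exact hle h hh
          have h2 : f₁ ≤ h := hmax f₁ (Multiset.mem_add.2 (Or.inl (by rw [hcfl]; exact_mod_cast List.mem_cons_self)))
          exact le_antisymm h1 h2
        subst hhf
        have hts : t < s' := by
          rcases hinv with rfl | hfac | hts
          · exact absurd rfl ht
          · exact absurd (hfac h (by rw [hcfl]; exact List.mem_cons_self)) (not_le_of_gt hhg)
          · exact hts
        have hft : h <+: t := by rw [hte]; exact List.prefix_append _ _
        have herase : ((CFL t : Multiset (List A)) + Q).erase h = ((G : Multiset (List A)) + Q) := by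
          rw [Multiset.erase_add_left_pos _ hmem', hcfl]
          congr 1
          have hcc : ((h :: G : List (List A)) : Multiset (List A)) = h ::ₘ ↑G := by
            exact_mod_cast rfl
          rw [hcc, Multiset.erase_cons_head]
        by_cases hp : h <+: s'
        · obtain ⟨s₂, rfl⟩ := hp
          have hs₂ : s₂ ≠ [] := by
            rintro rfl
            simp only [List.append_nil] at hts hft
            exact absurd hts (not_lt_of_ge (prefix_le hft))
          rw [herase, List.append_assoc, lt_append_cancel h, ← hGf]
          have hsfx : s₂ <:+ g := List.IsSuffix.trans ⟨h, rfl⟩ hsg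
          have hs₂g : s₂ ≠ g := by
            intro hcon
            have h1 := List.IsSuffix.length_le hsg
            have h2 := congrArg List.length hcon
            have h3 : 0 < h.length := List.length_pos_iff.2 hf₁ne
            simp at h1 h2 ⊢
            omega
          refine ih G.flatten Q g s₂ y ?_ hg hs₂ hsfx hs₂g hQ ?_
          · have h1 : t.length = h.length + G.flatten.length := by rw [hte]; simp
            have h2 : 0 < h.length := List.length_pos_iff.2 hf₁ne
            omega
          · rcases eq_or_ne G.flatten [] with hGn | hGn
            · exact Or.inl hGn
            · right; right
              rw [hte] at hts
              exact (lt_append_cancel h).1 hts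
        · -- h not a prefix of s'
          rcases lt_decomp hts with ⟨htp, _⟩ | ⟨p, a, b, tp, sp, hab, hte2, hse2⟩
          · exact absurd (List.IsPrefix.trans hft htp) hp
          · have hpt : p ++ [a] <+: t := by rw [hte2]; exact ⟨tp, by simp⟩
            have hlen : p.length + 1 ≤ h.length := by
              by_contra hcon
              push_neg at hcon
              have hfp : h <+: p := by
                refine List.prefix_of_prefix_length_le hft ?_ (by omega)
                rw [hte2]; exact ⟨a :: tp, by simp⟩
              exact hp (List.IsPrefix.trans hfp (by rw [hse2]; exact ⟨b :: sp, by simp⟩))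
            have hpa : p ++ [a] <+: h :=
              List.prefix_of_prefix_length_le hpt hft (by simpa using hlen)
            obtain ⟨fp, hfe⟩ := hpa
            have hh : h ++ Wm (((CFL t : Multiset (List A)) + Q).erase h)
                = p ++ a :: (fp ++ Wm (((CFL t : Multiset (List A)) + Q).erase h)) := by
              rw [← hfe]; simp [List.append_assoc]
            rw [hse2, hh, List.append_assoc, List.cons_append]
            exact lt_of_diff p _ _ hab
  
end A7sec

section A6sec
variable {A : Type*} [LinearOrder A]

theorem mem_of_mem_sortD {x : List A} {Q : Multiset (List A)} (hx : x ∈ sortD Q) : x ∈ Q := by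
  rw [← sortD_coe Q]
  exact_mod_cast hx

theorem Wm_facs_add (s : List A) (Q : Multiset (List A))
    (hcross : ∀ f ∈ CFL s, ∀ x ∈ Q, x ≤ f) :
    Wm ((CFL s : Multiset (List A)) + Q) = s ++ Wm Q := by
  have hL : sortD ((CFL s : Multiset (List A)) + Q) = CFL s ++ sortD Q := by
    refine sortD_eq ?_ ?_
    · rw [Decr, List.pairwise_append]
      exact ⟨CFL_decr s, sortD_decr Q, fun f hf x hx => hcross f hf x (mem_of_mem_sortD hx)⟩
    · have hsplit : ((CFL s ++ sortD Q : List (List A)) : Multiset (List A))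
          = ↑(CFL s) + ↑(sortD Q) := by exact_mod_cast rfl
      rw [hsplit, sortD_coe]
  rw [Wm, hL, List.flatten_append, join_CFL]
  rfl

theorem A6 (a : A) (s : List A) (Q : Multiset (List A)) (hm : Lyn (a :: s))
    (hQ : ∀ q ∈ Q, Lyn q) :
    a :: Wm ((CFL s : Multiset (List A)) + Q) ≤ Wm ((a :: s) ::ₘ Q) := by
  by_cases hbig : ∀ q ∈ Q, q ≤ a :: s
  · -- all elements of Q are at most the new word
    obtain ⟨h, hmem, hmax, _, hWm⟩ := sortD_pop (show (a::s) ::ₘ Q ≠ 0 by simp)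
    have hh : h = a :: s := by
      refine le_antisymm ?_ (hmax _ (Multiset.mem_cons_self _ _))
      rcases Multiset.mem_cons.1 hmem with rfl | hmem'
      · exact le_refl _
      · exact hbig h hmem'
    subst hh
    rw [hWm, Multiset.erase_cons_head]
    have hLHS : Wm ((CFL s : Multiset (List A)) + Q) = s ++ Wm Q := by
      refine Wm_facs_add s Q ?_
      intro f hf x hx
      exact le_of_lt (lt_of_le_of_lt (hbig x hx)
        (factors_of_suffix_gt s.length (a::s) [a] s (le_refl _) hm rfl (by simp) f hf))
    rw [hLHS]
    exact le_refl _
  · push_neg at hbig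
    obtain ⟨q0, hq0m, hq0⟩ := hbig
    have hq0' : (a :: s) < q0 := hq0
    obtain ⟨h, hmem, hmax, _, hWm⟩ := sortD_pop (show (a::s) ::ₘ Q ≠ 0 by simp)
    have hash : (a :: s) < h := lt_of_lt_of_le hq0' (hmax q0 (Multiset.mem_cons_of_mem hq0m))
    have hhQ : h ∈ Q := by
      rcases Multiset.mem_cons.1 hmem with rfl | hmem'
      · exact absurd hash (lt_irrefl _)
      · exact hmem'
    have hLyn : Lyn h := hQ h hhQ
    obtain ⟨c, h', rfl⟩ := List.exists_cons_of_ne_nil hLyn.ne_nil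
    rw [hWm]
    have hac : a ≤ c := by
      cases hash with
      | cons h => exact le_refl _
      | rel h => exact le_of_lt h
    rcases lt_or_eq_of_le hac with hlt | rfl
    · exact le_of_lt (List.Lex.rel hlt)
    · -- heads agree
      have hsh : s < h' := by
        cases hash with
        | cons h => exact h
        | rel h => exact absurd h (lt_irrefl _)
      have hh' : h' ≠ [] := by
        rintro rfl
        exact _root_.not_lt_nil _ hsh
      rw [List.cons_append]
      rw [le_cons_cancel]
      refine le_of_lt (A7 (s.length + Multiset.card Q) s Q (a :: h') h'
        (Wm (((a::s) ::ₘ Q).erase (a :: h'))) (le_refl _) hLyn hh' ⟨[a], rfl⟩ ?_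
        (fun q hq => ⟨hQ q hq, hmax q (Multiset.mem_cons_of_mem hq)⟩) ?_)
      · intro hcon
        have := congrArg List.length hcon
        simp at this
      · rcases eq_or_ne s [] with rfl | hs
        · exact Or.inl rfl
        · exact Or.inr (Or.inr hsh)

end A6sec

section MIPsec
variable {A : Type*} [LinearOrder A]

/-- `MIP S w` : the word `w` is an interleaving of the multiset of words `S`. -/
inductive MIP : Multiset (List A) → List A → Prop
  | empty : MIP 0 []
  | drop : ∀ {S w}, MIP S w → MIP ([] ::ₘ S) w
  | cons : ∀ {S w} (a : A) (s : List A), MIP (s ::ₘ S) w → MIP ((a :: s) ::ₘ S) (a :: w)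

theorem MIP_nil_elim : ∀ {T : Multiset (List A)} {w}, MIP T w →
    ∀ {S : Multiset (List A)}, T = ([] ::ₘ S) → MIP S w := by
  intro T w h
  induction h with
  | empty =>
      intro S hS
      exact absurd hS.symm (Multiset.cons_ne_zero)
  | @drop S' w' h ih =>
      intro S hS
      rcases Multiset.cons_eq_cons.1 hS with ⟨_, rfl⟩ | ⟨hne, _⟩
      · exact h
      · exact absurd rfl hne
  | @cons S' w' a s h ih =>
      intro S hS
      rcases Multiset.cons_eq_cons.1 hS with ⟨he, _⟩ | ⟨hne, cs, h1, h2⟩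
      · exact absurd he (by simp)
      · subst h2
        have h3 : MIP (s ::ₘ cs) w' := ih (by rw [h1, Multiset.cons_swap])
        exact MIP.cons a s h3
  
theorem MIP_self {S : Multiset (List A)} (h : MIP S []) : ∀ x : List A, MIP (x ::ₘ S) x := by
  intro x
  induction x with
  | nil => exact MIP.drop h
  | cons a x ih => exact MIP.cons a x ih

theorem MIP_split : ∀ {T : Multiset (List A)} {w}, MIP T w →
    ∀ {u v : List A} {S : Multiset (List A)}, T = ((u ++ v) ::ₘ S) →
    MIP (u ::ₘ v ::ₘ S) w := by
  intro T w h
  induction h with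
  | empty =>
      intro u v S hS
      exact absurd hS.symm (Multiset.cons_ne_zero)
  | @drop S' w' h ih =>
      intro u v S hS
      rcases Multiset.cons_eq_cons.1 hS with ⟨he, rfl⟩ | ⟨hne, cs, h1, h2⟩
      · obtain ⟨hu, hv⟩ := List.append_eq_nil_iff.1 he.symm
        subst hu; subst hv
        exact MIP.drop (MIP.drop h)
      · subst h2
        have h3 := ih (u := u) (v := v) (S := cs) h1
        -- goal : MIP (u ::ₘ v ::ₘ [] ::ₘ cs) w'
        have : MIP ([] ::ₘ u ::ₘ v ::ₘ cs) w' := MIP.drop h3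
        have hperm : ([] ::ₘ u ::ₘ v ::ₘ cs) = (u ::ₘ v ::ₘ [] ::ₘ cs) := by
          rw [Multiset.cons_swap ([] : List A) u, Multiset.cons_swap ([] : List A) v]
        rwa [hperm] at this
  | @cons S' w' a s h ih =>
      intro u v S hS
      rcases Multiset.cons_eq_cons.1 hS with ⟨he, rfl⟩ | ⟨hne, cs, h1, h2⟩
      · -- a :: s = u ++ v
        cases u with
        | nil =>
            simp only [List.nil_append] at he
            subst he
            exact MIP.drop (MIP.cons a s h)
        | cons a' u' =>
            rw [List.cons_append] at he
            injection he with h1 h2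
            subst h1
            subst h2
            have h3 := ih (u := u') (v := v) (S := S') rfl
            exact MIP.cons _ u' h3
      · subst h2
        have h3 : (s ::ₘ S') = ((u ++ v) ::ₘ (s ::ₘ cs)) := by
          rw [h1, Multiset.cons_swap]
        have h4 := ih h3
        have hperm : (u ::ₘ v ::ₘ s ::ₘ cs) = (s ::ₘ u ::ₘ v ::ₘ cs) := by
          rw [Multiset.cons_swap v s, Multiset.cons_swap u s]
        rw [hperm] at h4
        have h5 := MIP.cons a s h4
        have hperm2 : ((a :: s) ::ₘ u ::ₘ v ::ₘ cs) = (u ::ₘ v ::ₘ (a :: s) ::ₘ cs) := by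
          rw [Multiset.cons_swap (a::s) u, Multiset.cons_swap (a::s) v]
        rwa [hperm2] at h5

theorem MIP_cons_inv : ∀ {T : Multiset (List A)} {b : A} {y : List A}, MIP T (b :: y) →
    ∃ t S₂, T = ((b :: t) ::ₘ S₂) ∧ MIP (t ::ₘ S₂) y := by
  intro T b y h
  generalize hw : (b :: y : List A) = w at h
  induction h generalizing b y with
  | empty => exact absurd hw (by simp)
  | @drop S' w' h ih =>
      subst hw
      obtain ⟨t, S₂, hS, hM⟩ := ih rfl
      refine ⟨t, [] ::ₘ S₂, ?_, ?_⟩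
      · rw [hS, Multiset.cons_swap]
      · have := MIP.drop hM
        rwa [Multiset.cons_swap] at this
  | @cons S' w' a s h ih =>
      injection hw with h1 h2
      subst h1; subst h2
      exact ⟨s, S', rfl, h⟩
end MIPsec


section Shufsec
variable {A : Type*} [LinearOrder A]

theorem shuffles_nil_left (z : List A) : shuffles [] z = {z} := by
  rw [shuffles]

theorem shuffles_cons_cons (a : A) (as : List A) (b : A) (bs : List A) :
    shuffles (a :: as) (b :: bs)
      = (shuffles as (b :: bs)).map (a :: ·) + (shuffles (a :: as) bs).map (b :: ·) := by
  rw [shuffles]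

theorem MIP_shuffle : ∀ (n : ℕ) (u z w : List A) (S : Multiset (List A)),
    u.length + z.length ≤ n → w ∈ shuffles u z → MIP S z → MIP (u ::ₘ S) w := by
  intro n
  induction n with
  | zero =>
      intro u z w S hn hw hz
      obtain rfl : u = [] := List.eq_nil_of_length_eq_zero (by omega)
      obtain rfl : z = [] := List.eq_nil_of_length_eq_zero (by omega)
      rw [shuffles_nil_left] at hw
      obtain rfl : w = ([] : List A) := by simpa using hw
      exact MIP.drop hz
  | succ n ih =>
      intro u z w S hn hw hz
      cases u with
      | nil =>
          rw [shuffles_nil_left] at hw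
          obtain rfl : w = z := by simpa using hw
          exact MIP.drop hz
      | cons a as =>
          cases z with
          | nil =>
              have : w = a :: as := by simpa [shuffles] using hw
              subst this
              exact MIP_self hz _
          | cons b bs =>
              rw [shuffles_cons_cons] at hw
              rcases Multiset.mem_add.1 hw with hw' | hw'
              · obtain ⟨w', hw'', rfl⟩ := Multiset.mem_map.1 hw'
                have h1 : MIP (as ::ₘ S) w' := by
                  refine ih as (b :: bs) w' S ?_ hw'' hz
                  simp at hn ⊢
                  omega
                exact MIP.cons a as h1
              · obtain ⟨w', hw'', rfl⟩ := Multiset.mem_map.1 hw'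
                obtain ⟨t, S₂, hS, hM⟩ := MIP_cons_inv hz
                have h1 : MIP ((a :: as) ::ₘ t ::ₘ S₂) w' := by
                  refine ih (a :: as) bs w' (t ::ₘ S₂) ?_ hw'' hM
                  simp at hn ⊢
                  omega
                rw [Multiset.cons_swap] at h1
                have h2 := MIP.cons b t h1
                rw [hS, Multiset.cons_swap]
                exact h2

theorem MIP_refactor : ∀ (n : ℕ) (s : List A) (S : Multiset (List A)) (w : List A),
    s.length ≤ n → MIP (s ::ₘ S) w → MIP ((CFL s : Multiset (List A)) + S) w := by
  intro n
  induction n with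
  | zero =>
      intro s S w hn h
      obtain rfl : s = [] := List.eq_nil_of_length_eq_zero (by omega)
      have : MIP S w := MIP_nil_elim h rfl
      simpa [CFL] using this
  | succ n ih =>
      intro s S w hn h
      rcases eq_or_ne s [] with rfl | hs
      · have : MIP S w := MIP_nil_elim h rfl
        simpa [CFL] using this
      obtain ⟨f, G, hcfl, hf, hse, hGf, hle, hfne⟩ := CFL_cons_struct hs
      rw [hse] at h
      have h1 : MIP (f ::ₘ G.flatten ::ₘ S) w := MIP_split h rfl
      rw [Multiset.cons_swap] at h1
      have h2 : MIP ((CFL G.flatten : Multiset (List A)) + (f ::ₘ S)) w := by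
        refine ih G.flatten (f ::ₘ S) w ?_ h1
        have hlen : s.length = f.length + G.flatten.length := by rw [hse]; simp
        have : 0 < f.length := List.length_pos_iff.2 hfne
        omega
      rw [hGf] at h2
      have he : ((G : Multiset (List A)) + (f ::ₘ S)) = ((CFL s : Multiset (List A)) + S) := by
        rw [hcfl]
        have : ((f :: G : List (List A)) : Multiset (List A)) = f ::ₘ ↑G := by exact_mod_cast rfl
        rw [this]
        rw [Multiset.add_cons, Multiset.cons_add]
      rwa [he] at h2

theorem MIP_length : ∀ {S : Multiset (List A)} {w : List A}, MIP S w →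
    (S.map List.length).sum = w.length := by
  intro S w h
  induction h with
  | empty => simp
  | drop h ih => simpa using ih
  | cons a s h ih => simp_all; omega

theorem main_bound : ∀ (n : ℕ) (w : List A) (S : Multiset (List A)),
    w.length ≤ n → (∀ x ∈ S, Lyn x) → MIP S w → w ≤ Wm S := by
  intro n
  induction n with
  | zero =>
      intro w S hn hS h
      obtain rfl : w = [] := List.eq_nil_of_length_eq_zero (by omega)
      rcases eq_or_ne (Wm S) [] with he | hne
      · exact le_of_eq he.symm
      · exact le_of_lt (nil_lt hne)
  | succ n ih =>
      intro w S hn hS h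
      cases w with
      | nil =>
          rcases eq_or_ne (Wm S) [] with he | hne
          · exact le_of_eq he.symm
          · exact le_of_lt (nil_lt hne)
      | cons a w' =>
          obtain ⟨t, S₂, hS₂, hM⟩ := MIP_cons_inv h
          subst hS₂
          have hlyn : Lyn (a :: t) := hS _ (Multiset.mem_cons_self _ _)
          have h1 : MIP ((CFL t : Multiset (List A)) + S₂) w' :=
            MIP_refactor t.length t S₂ w' (le_refl _) hM
          have h2 : w' ≤ Wm ((CFL t : Multiset (List A)) + S₂) := by
            refine ih w' _ (by simp at hn; omega) ?_ h1
            intro x hx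
            rcases Multiset.mem_add.1 hx with hx' | hx'
            · exact CFL_lyn t x (by exact_mod_cast hx')
            · exact hS x (Multiset.mem_cons_of_mem hx')
          refine le_trans (le_cons_cancel.2 h2) ?_
          exact A6 a t S₂ hlyn (fun q hq => hS q (Multiset.mem_cons_of_mem hq))

end Shufsec




section FinsuppSec
variable {I : Type*} [DecidableEq I]

theorem mToF_apply (m : Multiset (List I)) (w : List I) :
    mToF m w = (m.count w : ℝ) := by
  induction m using Multiset.induction with
  | empty => simp [mToF]
  | cons a m ih =>
      rw [mToF, Multiset.map_cons, Multiset.sum_cons]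
      rw [Finsupp.add_apply]
      rw [show ((Multiset.map (fun w => Finsupp.single w (1:ℝ)) m).sum) = mToF m from rfl, ih]
      rw [Multiset.count_cons, Finsupp.single_apply]
      by_cases h : a = w
      · subst h; simp; ring
      · simp [h, Ne.symm h]

theorem shF_apply (x y : List I →₀ ℝ) (w : List I) :
    shF x y w = x.sum fun a ca => y.sum fun b cb =>
      (ca * cb) * ((shuffles a b).count w : ℝ) := by
  simp only [shF, Finsupp.sum_apply, Finsupp.smul_apply, mToF_apply, smul_eq_mul]


theorem shF_support {x y : List I →₀ ℝ} {w : List I} (h : shF x y w ≠ 0) :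
    ∃ a ∈ x.support, ∃ b ∈ y.support, w ∈ shuffles a b := by
  by_contra hcon
  push_neg at hcon
  apply h
  rw [shF_apply]
  refine Finset.sum_eq_zero fun a ha => ?_
  refine Finset.sum_eq_zero fun b hb => ?_
  have := hcon a ha b hb
  rw [← Multiset.count_pos, Nat.pos_iff_ne_zero, not_not] at this
  simp [this]

theorem shF_nonneg {x y : List I →₀ ℝ} (hx : ∀ w, 0 ≤ x w) (hy : ∀ w, 0 ≤ y w) (w : List I) :
    0 ≤ shF x y w := by
  rw [shF_apply]
  refine Finset.sum_nonneg fun a _ => ?_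
  refine Finset.sum_nonneg fun b _ => ?_
  exact mul_nonneg (mul_nonneg (hx a) (hy b)) (Nat.cast_nonneg _)

theorem shListProd_nonneg (l : List (List I)) (w : List I) : 0 ≤ shListProd l w := by
  induction l generalizing w with
  | nil =>
      rw [shListProd]
      simp [Finsupp.single_apply]
      split <;> norm_num
  | cons m l ih =>
      rw [shListProd] at ih ⊢
      rw [List.foldr_cons]
      exact shF_nonneg (fun u => by
        rw [Finsupp.single_apply]; split <;> norm_num) ih w

theorem shListProd_cons (m : List I) (l : List (List I)) :
    shListProd (m :: l) = shF (Finsupp.single m 1) (shListProd l) := rfl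

end FinsuppSec

section BridgeSec
variable {A : Type*} [LinearOrder A]

theorem shListProd_supp_MIP : ∀ (l : List (List A)) (w : List A),
    shListProd l w ≠ 0 → MIP (↑l) w := by
  intro l
  induction l with
  | nil =>
      intro w h
      rw [shListProd] at h
      simp only [List.foldr_nil] at h
      have : w = [] := by
        by_contra hw
        rw [Finsupp.single_apply] at h
        simp [Ne.symm hw] at h
      subst this
      exact MIP.empty
  | cons m l ih =>
      intro w h
      rw [shListProd_cons] at h
      obtain ⟨a, ha, b, hb, hmem⟩ := shF_support h
      have ham : a = m := by
        have := Finsupp.mem_support_iff.1 ha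
        by_contra hne
        rw [Finsupp.single_apply] at this
        simp [Ne.symm hne] at this
      subst ham
      have hb' : MIP (↑l) b := ih b (Finsupp.mem_support_iff.1 hb)
      have := MIP_shuffle (a.length + b.length) a b w ↑l (le_refl _) hmem hb'
      exact_mod_cast this

theorem Wm_eq_max {h : List A} {S : Multiset (List A)} (hmem : h ∈ S) (hmax : ∀ x ∈ S, x ≤ h) :
    Wm S = h ++ Wm (S.erase h) := by
  have hsd : sortD S = h :: sortD (S.erase h) := by
    refine sortD_eq ?_ ?_
    · refine List.pairwise_cons.2 ⟨?_, sortD_decr _⟩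
      intro x hx
      exact hmax x (Multiset.mem_of_mem_erase (mem_of_mem_sortD hx))
    · have : ((h :: sortD (S.erase h) : List (List A)) : Multiset (List A))
          = h ::ₘ ↑(sortD (S.erase h)) := by exact_mod_cast rfl
      rw [this, sortD_coe, Multiset.cons_erase hmem]
  rw [Wm, hsd, List.flatten_cons]
  rfl

theorem append_mem_shuffles : ∀ (m z : List A), (m ++ z) ∈ shuffles m z := by
  intro m
  induction m with
  | nil => intro z; rw [shuffles_nil_left]; simp
  | cons a as ih =>
      intro z
      cases z with
      | nil => simp [shuffles]
      | cons b bs =>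
          rw [shuffles_cons_cons]
          refine Multiset.mem_add.2 (Or.inl ?_)
          exact Multiset.mem_map.2 ⟨as ++ b :: bs, ih _, rfl⟩

theorem cons_mem_shuffles {m z X : List A} (hX : X ∈ shuffles m z) (c : A) :
    (c :: X) ∈ shuffles m (c :: z) := by
  cases m with
  | nil =>
      rw [shuffles_nil_left] at hX ⊢
      simp at hX
      simp [hX]
  | cons a as =>
      rw [shuffles_cons_cons]
      exact Multiset.mem_add.2 (Or.inr (Multiset.mem_map.2 ⟨X, hX, rfl⟩))

theorem append_mem_shuffles_of_mem {m z X : List A} (hX : X ∈ shuffles m z) (c : List A) :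
    (c ++ X) ∈ shuffles m (c ++ z) := by
  induction c with
  | nil => simpa using hX
  | cons a c ih => simpa using cons_mem_shuffles ih a

theorem Wm_cons_mem_shuffles : ∀ (n : ℕ) (m : List A) (S : Multiset (List A)),
    Multiset.card S ≤ n → Wm (m ::ₘ S) ∈ shuffles m (Wm S) := by
  intro n
  induction n with
  | zero =>
      intro m S hn
      obtain rfl : S = 0 := Multiset.card_eq_zero.1 (by omega)
      rw [Wm_zero]
      rw [Wm_eq_max (Multiset.mem_cons_self m 0) (by intro x hx; simp at hx; simp [hx])]
      simpa [Wm_zero] using append_mem_shuffles m []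
  | succ n ih =>
      intro m S hn
      obtain ⟨h, hmem, hmax, _, _⟩ := sortD_pop (show m ::ₘ S ≠ 0 by simp)
      by_cases hcase : h = m
      · subst hcase
        rw [Wm_eq_max hmem hmax, Multiset.erase_cons_head]
        exact append_mem_shuffles h (Wm S)
      · have hhS : h ∈ S := by
          rcases Multiset.mem_cons.1 hmem with rfl | hS
          · exact absurd rfl hcase
          · exact hS
        rw [Wm_eq_max hmem hmax, Multiset.erase_cons_tail _ (fun hc => hcase hc.symm)]
        have hWS : Wm S = h ++ Wm (S.erase h) :=
          Wm_eq_max hhS (fun x hx => hmax x (Multiset.mem_cons_of_mem hx))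
        rw [hWS]
        refine append_mem_shuffles_of_mem ?_ h
        refine ih m (S.erase h) ?_
        have h1 := Multiset.card_erase_of_mem hhS
        rw [Nat.pred_eq_sub_one] at h1
        have h2 : 0 < Multiset.card S := Multiset.card_pos_iff_exists_mem.2 ⟨h, hhS⟩
        omega

theorem shListProd_diag_pos : ∀ (l : List (List A)), 0 < shListProd l (Wm ↑l) := by
  intro l
  induction l with
  | nil =>
      rw [shListProd]
      simp only [List.foldr_nil]
      have : Wm ((↑([] : List (List A))) : Multiset (List A)) = [] := by
        rw [show ((↑([] : List (List A))) : Multiset (List A)) = 0 from rfl, Wm_zero]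
      rw [this]
      simp
  | cons m l ih =>
      rw [shListProd_cons, shF_apply]
      rw [Finsupp.sum_single_index (by simp)]
      have hcoe : ((↑(m :: l) : Multiset (List A))) = m ::ₘ ↑l := by exact_mod_cast rfl
      rw [hcoe]
      have hmem : Wm (m ::ₘ ↑l) ∈ shuffles m (Wm ↑l) :=
        Wm_cons_mem_shuffles _ m ↑l (le_refl _)
      have hcount : 0 < ((shuffles m (Wm ↑l)).count (Wm (m ::ₘ ↑l)) : ℝ) := by
        exact_mod_cast Multiset.count_pos.2 hmem
      have hterm : 0 < (1 * shListProd l (Wm ↑l)) *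
          ((shuffles m (Wm ↑l)).count (Wm (m ::ₘ ↑l)) : ℝ) := by
        have := ih
        positivity
      calc (0:ℝ) < (1 * shListProd l (Wm ↑l)) *
            ((shuffles m (Wm ↑l)).count (Wm (m ::ₘ ↑l)) : ℝ) := hterm
        _ ≤ _ := by
            refine Finset.single_le_sum (f := fun b =>
              (1 * shListProd l b) * ((shuffles m b).count (Wm (m ::ₘ ↑l)) : ℝ)) ?_ ?_
            · intro b _
              exact mul_nonneg (mul_nonneg (by norm_num) (shListProd_nonneg _ _))
                (Nat.cast_nonneg _)
            · exact Finsupp.mem_support_iff.2 (ne_of_gt ih)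

end BridgeSec



section FinalSec
variable {d : ℕ}

theorem isLyndon_iff_lyn (w : List (Fin d)) : IsLyndon w ↔ Lyn w := Iff.rfl

theorem wordLE_iff (a b : List (Fin d)) : WordLE a b ↔ a ≤ b := by
  rw [WordLE, lex_le_iff, or_comm]

/-- base-(d+1) value of a word, to well-order words by (length, lex) -/
def omg : List (Fin d) → ℕ
  | [] => 0
  | a :: w => (a.val + 1) * (d+1) ^ w.length + omg w

theorem omg_lt : ∀ w : List (Fin d), omg w < (d+1) ^ w.length := by
  intro w
  induction w with
  | nil => simp [omg]
  | cons a w ih =>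
      have ha : a.val + 2 ≤ d + 1 := by have := a.isLt; omega
      calc omg (a :: w) = (a.val + 1) * (d+1) ^ w.length + omg w := rfl
        _ < (a.val + 1) * (d+1) ^ w.length + (d+1) ^ w.length := by omega
        _ = (a.val + 2) * (d+1) ^ w.length := by ring
        _ ≤ (d+1) * (d+1) ^ w.length := Nat.mul_le_mul_right _ ha
        _ = (d+1) ^ (a :: w).length := by rw [List.length_cons, pow_succ]; ring

theorem omg_ge : ∀ w : List (Fin d), w ≠ [] → (d+1) ^ (w.length - 1) ≤ omg w := by
  intro w hw
  cases w with
  | nil => exact absurd rfl hw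
  | cons a w =>
      calc (d+1) ^ ((a::w).length - 1) = 1 * (d+1) ^ w.length := by simp
        _ ≤ (a.val + 1) * (d+1) ^ w.length := Nat.mul_le_mul_right _ (by omega)
        _ ≤ omg (a :: w) := Nat.le_add_right _ _

theorem omg_length_mono {u v : List (Fin d)} (h : u.length < v.length) : omg u < omg v := by
  have h1 : omg u < (d+1) ^ u.length := omg_lt u
  have h2 : (d+1 : ℕ) ^ u.length ≤ (d+1) ^ (v.length - 1) :=
    Nat.pow_le_pow_right (by omega) (by omega)
  have h3 : (d+1 : ℕ) ^ (v.length - 1) ≤ omg v :=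
    omg_ge v (by intro hv; rw [hv] at h; simp at h)
  omega

theorem omg_lex_mono : ∀ {u v : List (Fin d)}, u.length = v.length → u < v → omg u < omg v := by
  intro u v hlen h
  induction h with
  | nil => simp at hlen
  | @cons a l₁ l₂ h ih =>
      have hl : l₁.length = l₂.length := by simpa using hlen
      have := ih hl
      simp only [omg, hl]
      omega
  | @rel a₁ l₁ a₂ l₂ h =>
      have hl : l₁.length = l₂.length := by simpa using hlen
      have h1 : omg l₁ < (d+1) ^ l₁.length := omg_lt l₁
      have hab : a₁.val < a₂.val := h
      simp only [omg, hl]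
      have h2 : (a₁.val + 2) ≤ a₂.val + 1 := by omega
      have h3 : (a₁.val + 2) * (d+1) ^ l₂.length ≤ (a₂.val + 1) * (d+1) ^ l₂.length :=
        Nat.mul_le_mul_right _ h2
      rw [hl] at h1
      nlinarith [omg_lt l₂]

theorem Wm_length (S : Multiset (List (Fin d))) :
    (Wm S).length = (S.map List.length).sum := by
  rw [Wm, List.length_flatten, ← Multiset.sum_coe, ← Multiset.map_coe, sortD_coe]

theorem sorted_le_of_wordle {l : List (List (Fin d))} (h : List.Pairwise WordLE l) :
    List.Pairwise (· ≤ ·) l := h.imp (fun {a b} hab => (wordLE_iff a b).1 hab)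

theorem sortD_coe_of_sorted {l : List (List (Fin d))} (h : List.Pairwise (· ≤ ·) l) :
    sortD (↑l) = l.reverse := by
  refine sortD_eq ?_ (by rw [Multiset.coe_reverse])
  rw [Decr, List.pairwise_reverse]
  exact h

end FinalSec

abbrev Idx (d : ℕ) := {l : List (List (Fin d)) //
    (∀ w ∈ l, IsLyndon w) ∧ List.Pairwise WordLE l}

section TheoremSec
variable {d : ℕ}


/-- diagonal word of an index: concatenation in decreasing order -/
noncomputable def dg (i : Idx d) : List (Fin d) := Wm (↑i.1)

theorem dg_inj : Function.Injective (dg (d := d)) := by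
  intro i j hij
  have hi : sortD (↑i.1) = i.1.reverse := sortD_coe_of_sorted (sorted_le_of_wordle i.2.2)
  have hj : sortD (↑j.1) = j.1.reverse := sortD_coe_of_sorted (sorted_le_of_wordle j.2.2)
  have hrev : i.1.reverse = j.1.reverse := by
    refine cfl_unique _ _ ?_ ?_ ?_ ?_ ?_
    · rw [← hi]; exact sortD_decr _
    · intro x hx
      rw [List.mem_reverse] at hx
      exact (isLyndon_iff_lyn x).1 (i.2.1 x hx)
    · rw [← hj]; exact sortD_decr _
    · intro x hx
      rw [List.mem_reverse] at hx
      exact (isLyndon_iff_lyn x).1 (j.2.1 x hx)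
    · rw [← hi, ← hj]; exact hij
  exact Subtype.ext (by simpa using congrArg List.reverse hrev)

/-- the index whose diagonal is a given word -/
noncomputable def idxOf (w : List (Fin d)) : Idx d :=
  ⟨(CFL w).reverse, by
    constructor
    · intro x hx
      rw [List.mem_reverse] at hx
      exact (isLyndon_iff_lyn x).2 (CFL_lyn w x hx)
    · rw [List.pairwise_reverse]
      exact (CFL_decr w).imp (fun {a b} hab => (wordLE_iff b a).2 hab)⟩

theorem dg_idxOf (w : List (Fin d)) : dg (idxOf w) = w := by
  rw [dg, _root_.idxOf]
  have h1 : ((((CFL w).reverse : List (List (Fin d)))) : Multiset (List (Fin d)))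
      = ↑(CFL w) := Multiset.coe_reverse _
  rw [Wm, h1, sortD_eq (CFL_decr w) rfl, join_CFL]

theorem supp_triangular {i : Idx d} {w : List (Fin d)} (h : shListProd i.1 w ≠ 0) :
    w ≤ dg i ∧ w.length = (dg i).length := by
  have hM : MIP (↑i.1) w := shListProd_supp_MIP i.1 w h
  have hLyn : ∀ x ∈ (↑i.1 : Multiset (List (Fin d))), Lyn x := by
    intro x hx
    exact (isLyndon_iff_lyn x).1 (i.2.1 x (by exact_mod_cast hx))
  refine ⟨main_bound w.length w _ (le_refl _) hLyn hM, ?_⟩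
  rw [dg, Wm_length]
  exact (MIP_length hM).symm

theorem diag_pos (i : Idx d) : 0 < shListProd i.1 (dg i) := shListProd_diag_pos i.1

theorem omg_lt_of_supp_ne {i : Idx d} {w : List (Fin d)} (h : shListProd i.1 w ≠ 0)
    (hne : w ≠ dg i) : omg w < omg (dg i) := by
  obtain ⟨hle, hlen⟩ := supp_triangular h
  rcases hle.lt_or_eq with hlt | heq
  · exact omg_lex_mono hlen hlt
  · exact absurd heq hne

theorem span_top :
    ⊤ ≤ Submodule.span ℝ (Set.range fun i : Idx d => shListProd i.1) := by
  set SP := Submodule.span ℝ (Set.range fun i : Idx d => shListProd i.1) with hSP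
  have key : ∀ n : ℕ, ∀ w : List (Fin d), omg w = n → Finsupp.single w (1:ℝ) ∈ SP := by
    intro n
    induction n using Nat.strong_induction_on with
    | _ n IH =>
        intro w hw
        set i := _root_.idxOf w with hi
        have hdg : dg i = w := dg_idxOf w
        set c : ℝ := shListProd i.1 w with hc
        have hcpos : 0 < c := by rw [hc, ← hdg]; exact diag_pos i
        set r : List (Fin d) →₀ ℝ := shListProd i.1 - c • Finsupp.single w 1 with hr
        have hrsupp : ∀ u ∈ r.support, omg u < n := by
          intro u hu
          have hru : r u ≠ 0 := Finsupp.mem_support_iff.1 hu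
          rcases eq_or_ne u w with rfl | hne
          · exfalso
            apply hru
            rw [hr]
            simp [Finsupp.single_apply, hc]
          · have hval : shListProd i.1 u ≠ 0 := by
              intro hz
              apply hru
              rw [hr]
              simp [Finsupp.single_apply, Ne.symm hne, hz]
            have h2 : omg u < omg (dg i) := omg_lt_of_supp_ne hval (by rw [hdg]; exact hne)
            rw [hdg] at h2
            rw [← hw]
            exact h2
        have hrSP : r ∈ SP := by
          have hrw : r.sum (fun u ru => ru • Finsupp.single u (1:ℝ)) = r := by
            have hfun : (fun (u : List (Fin d)) (ru : ℝ) => ru • Finsupp.single u (1:ℝ))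
                = fun u ru => Finsupp.single u ru := by
              funext u ru
              rw [Finsupp.smul_single, smul_eq_mul, mul_one]
            rw [hfun, Finsupp.sum_single]
          rw [← hrw]
          refine Submodule.sum_mem SP ?_
          intro u hu
          exact Submodule.smul_mem SP _ (IH (omg u) (hrsupp u hu) u rfl)
        have hfam : shListProd i.1 ∈ SP := Submodule.subset_span ⟨i, rfl⟩
        have : Finsupp.single w (1:ℝ) = c⁻¹ • (shListProd i.1 - r) := by
          rw [hr]
          rw [sub_sub_cancel]
          rw [smul_smul, inv_mul_cancel₀ (ne_of_gt hcpos), one_smul]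
        rw [this]
        exact Submodule.smul_mem SP _ (Submodule.sub_mem SP hfam hrSP)
  intro x _
  induction x using Finsupp.induction with
  | zero => exact Submodule.zero_mem SP
  | single_add w b f _ _ ihf =>
      refine Submodule.add_mem SP ?_ (ihf trivial)
      have : Finsupp.single w b = b • Finsupp.single w (1:ℝ) := by
        rw [Finsupp.smul_single, smul_eq_mul, mul_one]
      rw [this]
      exact Submodule.smul_mem SP _ (key (omg w) w rfl)

end TheoremSec

section TheoremSec2
variable {d : ℕ}

theorem fam_indep : LinearIndependent ℝ (fun i : Idx d => shListProd i.1) := by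
  rw [linearIndependent_iff']
  intro s g hsum i hi
  by_contra hgi
  set T := s.filter (fun j => g j ≠ 0) with hT
  have hiT : i ∈ T := Finset.mem_filter.2 ⟨hi, hgi⟩
  obtain ⟨i₀, hi₀T, hmaxT⟩ := T.exists_max_image (fun j => omg (dg j)) ⟨i, hiT⟩
  have hi₀s : i₀ ∈ s := (Finset.mem_filter.1 hi₀T).1
  have hgi₀ : g i₀ ≠ 0 := (Finset.mem_filter.1 hi₀T).2
  have heval : (∑ j ∈ s, g j • shListProd j.1) (dg i₀) = 0 := by
    rw [hsum]; rfl
  rw [Finsupp.finset_sum_apply] at heval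
  have hsingle : ∀ j ∈ s, j ≠ i₀ → (g j • shListProd j.1) (dg i₀) = 0 := by
    intro j hj hne
    rcases eq_or_ne (g j) 0 with hz | hz
    · rw [Finsupp.smul_apply, hz, zero_smul]
    · rw [Finsupp.smul_apply]
      have hjT : j ∈ T := Finset.mem_filter.2 ⟨hj, hz⟩
      have hjz : shListProd j.1 (dg i₀) = 0 := by
        by_contra hcon
        rcases eq_or_ne (dg i₀) (dg j) with he | hne2
        · exact hne (dg_inj he.symm)
        · have h1 : omg (dg i₀) < omg (dg j) := omg_lt_of_supp_ne hcon hne2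
          have h2 := hmaxT j hjT
          omega
      rw [hjz, smul_zero]
  rw [Finset.sum_eq_single_of_mem i₀ hi₀s hsingle] at heval
  rw [Finsupp.smul_apply, smul_eq_mul] at heval
  have := diag_pos i₀
  rcases mul_eq_zero.1 heval with h | h
  · exact hgi₀ h
  · exact absurd h (ne_of_gt this)

end TheoremSec2

/-- The shuffle algebra `(T(ℝ^d), ⧢)` is a free commutative
(polynomial) algebra on the Lyndon words: the shuffle products of sorted
lists of Lyndon words (i.e. the monomials in Lyndon words, each monomial
taken once) form a basis of `T(ℝ^d)`; hence every word has a unique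
expression, up to ordering of the factors, as a polynomial in shuffle
products of Lyndon words. -/
theorem shuffleAlgebra_free_on_lyndon (d : ℕ) :
    ∃ b : Module.Basis {l : List (List (Fin d)) //
        (∀ w ∈ l, IsLyndon w) ∧ List.Pairwise WordLE l} ℝ (List (Fin d) →₀ ℝ),
      ∀ i, b i = shListProd i.1 := by
  exact ⟨Module.Basis.mk fam_indep span_top, fun i => Module.Basis.mk_apply _ _ i⟩
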